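/- For subsets I, J of [k], there exists a homomorphism from the oriented path Q_I to the oriented path Q_J if and only if I ⊆ J. Moreover, when it exists, this homomorphism is unique and surjective. -/

import Mathlib

/-- Direction pattern of the oriented path `Q_I`: a single edge, then for each
`l ∈ [k]` a single edge (if `l ∈ I`) or a zigzag (otherwise), then a single edge. -/
def qdirs {k : ℕ} (I : Finset (Fin k)) : List Bool :=
  [true] ++ ((List.finRange k).flatMap
    (fun l => if l ∈ I then [true] else [true, false, true])) ++ [true]

/-- Edge relation of the oriented path with direction pattern `ds`
(vertices are `0, 1, ..., ds.length`). -/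
def pedge (ds : List Bool) (x y : ℕ) : Prop :=
  (y = x + 1 ∧ x < ds.length ∧ ds.getD x false = true) ∨
  (x = y + 1 ∧ y < ds.length ∧ ds.getD y false = false)

/-- A homomorphism between the oriented paths with direction patterns `ds` and `ds'`:
a map on vertices preserving directed edges (not required to preserve endpoints). -/
def pathHom (ds ds' : List Bool) (φ : ℕ → ℕ) : Prop :=
  ∀ x < ds.length,
    (ds.getD x false = true → pedge ds' (φ x) (φ (x + 1))) ∧
    (ds.getD x false = false → pedge ds' (φ (x + 1)) (φ x))

namespace QP
variable {k : ℕ}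

def blk (I : Finset (Fin k)) (j : Fin k) : List Bool :=
  if j ∈ I then [true] else [true, false, true]

lemma qdirs_eq (I : Finset (Fin k)) :
    qdirs I = true :: ((List.finRange k).flatMap (blk I) ++ [true]) := rfl

def bstart (I : Finset (Fin k)) (l : ℕ) : ℕ :=
  1 + (((List.finRange k).take l).flatMap (blk I)).length

lemma bstart_zero (I : Finset (Fin k)) : bstart I 0 = 1 := by simp [bstart]

lemma blk_len (I : Finset (Fin k)) (j : Fin k) :
    (blk I j).length = if j ∈ I then 1 else 3 := by
  by_cases h : j ∈ I <;> simp [blk, h]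

lemma bstart_succ (I : Finset (Fin k)) {l : ℕ} (h : l < k) :
    bstart I (l+1) = bstart I l + (blk I ⟨l, h⟩).length := by
  have hl : l < (List.finRange k).length := by simpa using h
  simp only [bstart, List.take_succ, List.flatMap_append, List.length_append]
  rw [List.getElem?_eq_getElem hl]
  simp [List.getElem_finRange, Fin.cast]
  omega

lemma one_le_blk_len (I : Finset (Fin k)) (j : Fin k) : 1 ≤ (blk I j).length := by
  by_cases h : j ∈ I <;> simp [blk, h]

lemma bstart_lt (I : Finset (Fin k)) {l l' : ℕ} (h : l < l') (h' : l' ≤ k) :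
    bstart I l < bstart I l' := by
  induction l' with
  | zero => omega
  | succ m ih =>
    have hm : m < k := by omega
    rw [bstart_succ I hm]
    have := one_le_blk_len I ⟨m, hm⟩
    rcases Nat.lt_or_ge l m with h2 | h2
    · have := ih h2 (by omega); omega
    · have : l = m := by omega
      subst this; omega

lemma bstart_le (I : Finset (Fin k)) {l l' : ℕ} (h : l ≤ l') (h' : l' ≤ k) :
    bstart I l ≤ bstart I l' := by
  rcases Nat.lt_or_ge l l' with h2 | h2
  · exact le_of_lt (bstart_lt I h2 h')
  · have : l = l' := by omega
    subst this; rfl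

lemma len_qdirs (I : Finset (Fin k)) : (qdirs I).length = bstart I k + 1 := by
  rw [qdirs_eq, bstart]
  have : (List.finRange k).take k = List.finRange k := by
    apply List.take_of_length_le; simp
  rw [this]
  simp; omega

lemma qdirs_decomp (I : Finset (Fin k)) {l : ℕ} (hl : l ≤ k) :
    qdirs I = (true :: ((List.finRange k).take l).flatMap (blk I)) ++
      (((List.finRange k).drop l).flatMap (blk I) ++ [true]) := by
  rw [qdirs_eq]
  rw [← List.take_append_drop l (List.finRange k), List.flatMap_append]
  simp

lemma getD_block (I : Finset (Fin k)) {l : ℕ} (hl : l ≤ k) (j : ℕ) :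
    (qdirs I).getD (bstart I l + j) false =
      (((List.finRange k).drop l).flatMap (blk I) ++ [true]).getD j false := by
  rw [qdirs_decomp I hl]
  rw [List.getD_append_right]
  · congr 1
    simp [bstart]; omega
  · simp [bstart]; omega

lemma drop_finRange {l : ℕ} (h : l < k) :
    (List.finRange k).drop l = ⟨l, h⟩ :: (List.finRange k).drop (l+1) := by
  have hl : l < (List.finRange k).length := by simpa using h
  rw [List.drop_eq_getElem_cons hl]
  simp [List.getElem_finRange, Fin.cast]

lemma getD_bstart (I : Finset (Fin k)) {l : ℕ} (hl : l ≤ k) :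
    (qdirs I).getD (bstart I l) false = true := by
  rcases Nat.lt_or_ge l k with h | h
  · have hb := getD_block I hl 0
    rw [drop_finRange h] at hb
    rw [show bstart I l + 0 = bstart I l by omega] at hb
    rw [hb]
    by_cases hI : (⟨l, h⟩ : Fin k) ∈ I <;> simp [blk, hI]
  · have hlk : l = k := by omega
    subst hlk
    have hb := getD_block I le_rfl 0
    rw [show bstart I l + 0 = bstart I l by omega] at hb
    rw [hb]
    have hd : (List.finRange l).drop l = [] := by
      apply List.drop_eq_nil_of_le; simp
    rw [hd]; rfl

lemma getD_zig (I : Finset (Fin k)) {l : ℕ} (h : l < k) (hI : (⟨l, h⟩ : Fin k) ∉ I) :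
    (qdirs I).getD (bstart I l + 1) false = false ∧
    (qdirs I).getD (bstart I l + 2) false = true := by
  have h1 := getD_block I (le_of_lt h) 1
  have h2 := getD_block I (le_of_lt h) 2
  rw [drop_finRange h] at h1 h2
  rw [h1, h2]
  simp [blk, hI]

lemma getD_zero (I : Finset (Fin k)) : (qdirs I).getD 0 false = true := by
  rw [qdirs_eq]; rfl


lemma coverage_aux (I : Finset (Fin k)) :
    ∀ L, L ≤ k → ∀ x, 1 ≤ x → x < bstart I L →
      ∃ l, ∃ h : l < k, l < L ∧ bstart I l ≤ x ∧ x < bstart I (l+1) := by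
  intro L
  induction L with
  | zero => intro _ x h1 h2; rw [bstart_zero] at h2; omega
  | succ m ih =>
    intro hm x h1 h2
    rcases Nat.lt_or_ge x (bstart I m) with h3 | h3
    · obtain ⟨l, h, hl, hle, hlt⟩ := ih (by omega) x h1 h3
      exact ⟨l, h, by omega, hle, hlt⟩
    · exact ⟨m, by omega, by omega, h3, h2⟩

/-- Coverage of all positions of `qdirs I`. -/
lemma coverage (I : Finset (Fin k)) {x : ℕ} (hx : x < (qdirs I).length) :
    x = 0 ∨ x = bstart I k ∨ ∃ l, ∃ h : l < k,
      ((⟨l, h⟩ : Fin k) ∈ I ∧ x = bstart I l) ∨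
      ((⟨l, h⟩ : Fin k) ∉ I ∧
        (x = bstart I l ∨ x = bstart I l + 1 ∨ x = bstart I l + 2)) := by
  rw [len_qdirs] at hx
  rcases Nat.eq_zero_or_pos x with h0 | h0
  · exact Or.inl h0
  rcases Nat.lt_or_ge x (bstart I k) with h1 | h1
  · obtain ⟨l, h, _, hle, hlt⟩ := coverage_aux I k le_rfl x h0 h1
    right; right
    refine ⟨l, h, ?_⟩
    rw [bstart_succ I h, blk_len] at hlt
    by_cases hI : (⟨l, h⟩ : Fin k) ∈ I
    · left; refine ⟨hI, ?_⟩; rw [if_pos hI] at hlt; omega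
    · right; refine ⟨hI, ?_⟩; rw [if_neg hI] at hlt; omega
  · right; left; omega

/-- Characterization of `false` positions. -/
lemma getD_false_iff (I : Finset (Fin k)) {x : ℕ} (hx : x < (qdirs I).length)
    (hf : (qdirs I).getD x false = false) :
    ∃ l, ∃ h : l < k, (⟨l, h⟩ : Fin k) ∉ I ∧ x = bstart I l + 1 := by
  rcases coverage I hx with h0 | hk' | ⟨l, h, ⟨hI, hb⟩ | ⟨hI, hb | hb | hb⟩⟩
  · rw [h0, getD_zero] at hf; cases hf
  · rw [hk', getD_bstart I le_rfl] at hf; cases hf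
  · rw [hb, getD_bstart I (le_of_lt h)] at hf; cases hf
  · rw [hb, getD_bstart I (le_of_lt h)] at hf; cases hf
  · exact ⟨l, h, hI, hb⟩
  · rw [hb, (getD_zig I h hI).2] at hf; cases hf

/-- Block starts don't coincide with zigzag interiors. -/
lemma interior (J : Finset (Fin k)) {l l' : ℕ} (hl : l ≤ k) (h' : l' < k)
    (hJ : (⟨l', h'⟩ : Fin k) ∉ J) :
    bstart J l ≠ bstart J l' + 1 ∧ bstart J l ≠ bstart J l' + 2 := by
  rcases Nat.lt_or_ge l' l with h2 | h2
  · have h3 : bstart J (l'+1) ≤ bstart J l := bstart_le J h2 hl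
    rw [bstart_succ J h', blk_len, if_neg hJ] at h3
    omega
  · have h3 : bstart J l ≤ bstart J l' := bstart_le J h2 (by omega)
    omega

def lvl (ds : List Bool) (x : ℕ) : ℤ :=
  ∑ i ∈ Finset.range x, (if ds.getD i false then 1 else -1)

lemma lvl_zero (ds : List Bool) : lvl ds 0 = 0 := by simp [lvl]

lemma lvl_succ (ds : List Bool) (x : ℕ) :
    lvl ds (x+1) = lvl ds x + (if ds.getD x false then 1 else -1) := by
  simp [lvl, Finset.sum_range_succ]

lemma lvl_bstart (I : Finset (Fin k)) : ∀ l, l ≤ k →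
    lvl (qdirs I) (bstart I l) = l + 1 := by
  intro l
  induction l with
  | zero =>
    intro _
    rw [bstart_zero, show (1:ℕ) = 0 + 1 from rfl, lvl_succ, lvl_zero, getD_zero]
    simp
  | succ m ih =>
    intro hm
    have hmk : m < k := by omega
    rw [bstart_succ I hmk, blk_len]
    by_cases hI : (⟨m, hmk⟩ : Fin k) ∈ I
    · rw [if_pos hI, lvl_succ, ih (by omega), getD_bstart I (by omega)]
      norm_num
    · rw [if_neg hI]
      have hz := getD_zig I hmk hI
      rw [show bstart I m + 3 = (bstart I m + 2) + 1 by omega, lvl_succ,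
        show bstart I m + 2 = (bstart I m + 1) + 1 by omega, lvl_succ,
        lvl_succ, ih (by omega), getD_bstart I (by omega), hz.1, hz.2]
      norm_num

lemma lvl_len (I : Finset (Fin k)) : lvl (qdirs I) ((qdirs I).length) = k + 2 := by
  rw [len_qdirs, lvl_succ, lvl_bstart I k le_rfl, getD_bstart I le_rfl]
  norm_num; ring

lemma lvl_zig (I : Finset (Fin k)) {l : ℕ} (h : l < k) (hI : (⟨l, h⟩ : Fin k) ∉ I) :
    lvl (qdirs I) (bstart I l + 1) = l + 2 ∧
    lvl (qdirs I) (bstart I l + 2) = l + 1 := by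
  have hz := getD_zig I h hI
  have h1 : lvl (qdirs I) (bstart I l + 1) = l + 2 := by
    rw [lvl_succ, lvl_bstart I l (le_of_lt h), getD_bstart I (le_of_lt h)]
    norm_num; ring
  refine ⟨h1, ?_⟩
  rw [show bstart I l + 2 = (bstart I l + 1) + 1 by omega, lvl_succ, h1, hz.1]
  norm_num; ring

/-- Level bounds. -/
lemma lvl_bounds (I : Finset (Fin k)) {x : ℕ} (hx : x ≤ (qdirs I).length) :
    0 ≤ lvl (qdirs I) x ∧ lvl (qdirs I) x ≤ k + 2 ∧
    (lvl (qdirs I) x = 0 → x = 0) ∧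
    (lvl (qdirs I) x = k + 2 → x = (qdirs I).length) := by
  rcases Nat.eq_or_lt_of_le hx with he | hlt
  · rw [he, lvl_len]
    refine ⟨by positivity, le_rfl, by omega, fun _ => rfl⟩
  have hne : x ≠ (qdirs I).length := by omega
  rcases coverage I hlt with h0 | hk' | ⟨l, h, ⟨hI, hb⟩ | ⟨hI, hb | hb | hb⟩⟩
  · subst h0; rw [lvl_zero]
    refine ⟨le_rfl, by positivity, fun _ => rfl, by omega⟩
  · subst hk'; rw [lvl_bstart I k le_rfl]
    constructor; · positivity
    refine ⟨by omega, by omega, fun hc => absurd ?_ hne⟩; omega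
  · subst hb; rw [lvl_bstart I l (le_of_lt h)]
    refine ⟨by positivity, by omega, by omega, by omega⟩
  · subst hb; rw [lvl_bstart I l (le_of_lt h)]
    refine ⟨by positivity, by omega, by omega, by omega⟩
  · subst hb; rw [(lvl_zig I h hI).1]
    refine ⟨by positivity, by omega, by omega, by omega⟩
  · subst hb; rw [(lvl_zig I h hI).2]
    refine ⟨by positivity, by omega, by omega, by omega⟩


section Walk

variable {ds ds' : List Bool} {φ : ℕ → ℕ}

lemma hom_step (hφ : pathHom ds ds' φ) {x : ℕ} (hx : x < ds.length) :
    (φ (x+1) = φ x + 1 ∧ φ x < ds'.length ∧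
      ds'.getD (φ x) false = ds.getD x false) ∨
    (φ x = φ (x+1) + 1 ∧ φ (x+1) < ds'.length ∧
      ds'.getD (φ (x+1)) false = !(ds.getD x false)) := by
  have h := hφ x hx
  cases hb : ds.getD x false
  · rcases h.2 hb with ⟨h1, h2, h3⟩ | ⟨h1, h2, h3⟩
    · right; exact ⟨h1, h2, h3⟩
    · left; exact ⟨h1, h2, h3⟩
  · rcases h.1 hb with ⟨h1, h2, h3⟩ | ⟨h1, h2, h3⟩
    · left; exact ⟨h1, h2, h3⟩
    · right; exact ⟨h1, h2, h3⟩

lemma hom_bound (hφ : pathHom ds ds' φ) (hlen : 1 ≤ ds.length) :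
    ∀ x, x ≤ ds.length → φ x ≤ ds'.length := by
  intro x hx
  rcases Nat.lt_or_ge x ds.length with h | h
  · rcases hom_step hφ h with ⟨_, h2, _⟩ | ⟨h1, h2, _⟩ <;> omega
  · have hx' : x = ds.length := by omega
    rw [hx']
    have hlt : ds.length - 1 < ds.length := by omega
    have key : ds.length - 1 + 1 = ds.length := by omega
    rcases hom_step hφ hlt with ⟨h1, h2, _⟩ | ⟨h1, h2, _⟩ <;>
      simp only [key] at h1 h2 <;> omega

lemma hom_lvl (hφ : pathHom ds ds' φ) :
    ∀ x, x ≤ ds.length → lvl ds' (φ x) = lvl ds x + lvl ds' (φ 0) := by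
  intro x
  induction x with
  | zero => intro _; rw [lvl_zero]; ring
  | succ m ih =>
    intro hm
    have hm' : m < ds.length := by omega
    have hih := ih (by omega)
    rw [lvl_succ]
    rcases hom_step hφ hm' with ⟨h1, h2, h3⟩ | ⟨h1, h2, h3⟩
    · rw [h1, lvl_succ, h3, hih]; ring
    · have hstep : lvl ds' (φ m) = lvl ds' (φ (m+1)) +
          (if ds'.getD (φ (m+1)) false then 1 else -1) := by
        rw [← lvl_succ, ← h1]
      rw [h3] at hstep
      cases hb : ds.getD m false <;> rw [hb] at hstep <;>
        simp at hstep ⊢ <;> omega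

end Walk

section Hom

variable {k : ℕ} {I J : Finset (Fin k)} {φ : ℕ → ℕ}

lemma hom_len_pos (I : Finset (Fin k)) : 1 ≤ (qdirs I).length := by
  rw [len_qdirs]; omega

lemma hom_ends (hφ : pathHom (qdirs I) (qdirs J) φ) :
    φ 0 = 0 ∧ φ ((qdirs I).length) = (qdirs J).length ∧
    ∀ x, x ≤ (qdirs I).length → lvl (qdirs J) (φ x) = lvl (qdirs I) x := by
  have hb := hom_bound hφ (hom_len_pos I)
  have h0 : φ 0 ≤ (qdirs J).length := hb 0 (by have := hom_len_pos I; omega)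
  have hn : φ ((qdirs I).length) ≤ (qdirs J).length := hb _ le_rfl
  have hl0 := lvl_bounds J h0
  have hln := lvl_bounds J hn
  have htr := hom_lvl hφ
  have htn := htr ((qdirs I).length) le_rfl
  rw [lvl_len] at htn
  have hc0 : lvl (qdirs J) (φ 0) = 0 := by omega
  have hφ0 : φ 0 = 0 := hl0.2.2.1 hc0
  have hcn : lvl (qdirs J) (φ ((qdirs I).length)) = k + 2 := by omega
  refine ⟨hφ0, hln.2.2.2 hcn, fun x hx => by have := htr x hx; omega⟩

lemma up_step (hφ : pathHom (qdirs I) (qdirs J) φ) {x : ℕ} (hx : x < (qdirs I).length)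
    (ht : (qdirs I).getD x false = true) :
    (φ (x+1) = φ x + 1 ∧ φ x < (qdirs J).length ∧
      (qdirs J).getD (φ x) false = true) ∨
    (∃ l', ∃ h' : l' < k, (⟨l', h'⟩ : Fin k) ∉ J ∧
      φ x = bstart J l' + 2 ∧ φ (x+1) = bstart J l' + 1) := by
  rcases hom_step hφ hx with ⟨h1, h2, h3⟩ | ⟨h1, h2, h3⟩
  · left; exact ⟨h1, h2, by rw [h3, ht]⟩
  · right
    rw [ht] at h3
    have h3' : (qdirs J).getD (φ (x+1)) false = false := h3
    obtain ⟨l', h', hJ, he⟩ := getD_false_iff J h2 h3'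
    exact ⟨l', h', hJ, by omega, by omega⟩

lemma down_step (hφ : pathHom (qdirs I) (qdirs J) φ) {x : ℕ} (hx : x < (qdirs I).length)
    (hf : (qdirs I).getD x false = false) :
    (φ x = φ (x+1) + 1 ∧ φ (x+1) < (qdirs J).length ∧
      (qdirs J).getD (φ (x+1)) false = true) ∨
    (φ (x+1) = φ x + 1 ∧ φ x < (qdirs J).length ∧
      (qdirs J).getD (φ x) false = false) := by
  rcases hom_step hφ hx with ⟨h1, h2, h3⟩ | ⟨h1, h2, h3⟩
  · right; exact ⟨h1, h2, by rw [h3, hf]⟩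
  · left; exact ⟨h1, h2, by rw [h3, hf]; rfl⟩

lemma up_at_bstart (hφ : pathHom (qdirs I) (qdirs J) φ) {x : ℕ} (hx : x < (qdirs I).length)
    (ht : (qdirs I).getD x false = true) {l : ℕ} (hl : l ≤ k)
    (hv : φ x = bstart J l) : φ (x+1) = bstart J l + 1 := by
  rcases up_step hφ hx ht with ⟨h1, _, _⟩ | ⟨l', h', hJ, he, _⟩
  · omega
  · exact absurd (by omega : bstart J l = bstart J l' + 2) (interior J hl h' hJ).2

lemma peak_dead (hφ : pathHom (qdirs I) (qdirs J) φ) {x : ℕ} (hx : x < (qdirs I).length)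
    (ht : (qdirs I).getD x false = true) {l' : ℕ} (h' : l' < k)
    (hJ : (⟨l', h'⟩ : Fin k) ∉ J) (hv : φ x = bstart J l' + 1) : False := by
  rcases up_step hφ hx ht with ⟨_, _, h3⟩ | ⟨l'', h'', hJ'', he, _⟩
  · rw [hv, (getD_zig J h' hJ).1] at h3; cases h3
  · exact absurd (by omega : bstart J l' = bstart J l'' + 1)
      (interior J (le_of_lt h') h'' hJ'').1

lemma bstart_inj (J : Finset (Fin k)) {l l' : ℕ} (hl : l ≤ k) (hl' : l' ≤ k)
    (h : bstart J l = bstart J l') : l = l' := by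
  rcases Nat.lt_trichotomy l l' with h2 | h2 | h2
  · have := bstart_lt J h2 hl'; omega
  · exact h2
  · have := bstart_lt J h2 hl; omega

lemma bstart_lt_len (I : Finset (Fin k)) {l : ℕ} (hl : l ≤ k) :
    bstart I l < (qdirs I).length := by
  rw [len_qdirs]
  have := bstart_le I hl le_rfl
  omega

lemma force_step (hφ : pathHom (qdirs I) (qdirs J) φ) (hIJ : I ⊆ J) {l : ℕ} (h : l < k)
    (hb : φ (bstart I l) = bstart J l) :
    φ (bstart I (l+1)) = bstart J (l+1) ∧
    ((⟨l, h⟩ : Fin k) ∉ I →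
      φ (bstart I l + 1) = bstart J l + 1 ∧
      φ (bstart I l + 2) = bstart J l + (if (⟨l, h⟩ : Fin k) ∈ J then 0 else 2)) := by
  have hsI := bstart_succ I h
  have hsJ := bstart_succ J h
  rw [blk_len] at hsI hsJ
  have hlen1 : bstart I (l+1) < (qdirs I).length := bstart_lt_len I (by omega)
  have ht0 := getD_bstart I (le_of_lt h)
  have hx0 : bstart I l < (qdirs I).length := bstart_lt_len I (le_of_lt h)
  by_cases hI : (⟨l, h⟩ : Fin k) ∈ I
  · -- single edge in both
    have hJl : (⟨l, h⟩ : Fin k) ∈ J := hIJ hI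
    have h1 := up_at_bstart hφ hx0 ht0 (le_of_lt h) hb
    rw [if_pos hI] at hsI
    rw [if_pos hJl] at hsJ
    exact ⟨by rw [hsI, hsJ]; exact h1, fun hc => absurd hI hc⟩
  · -- zigzag in I
    rw [if_neg hI] at hsI
    have hx1 : bstart I l + 1 < (qdirs I).length := by omega
    have hx2 : bstart I l + 2 < (qdirs I).length := by omega
    have hz := getD_zig I h hI
    have h1 := up_at_bstart hφ hx0 ht0 (le_of_lt h) hb
    have ht3 : (qdirs I).getD (bstart I (l+1)) false = true :=
      getD_bstart I (by omega)
    by_cases hJl : (⟨l, h⟩ : Fin k) ∈ J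
    · -- fold: zigzag in I, single edge in J
      rw [if_pos hJl] at hsJ
      have hBs : bstart J l + 1 = bstart J (l+1) := by omega
      -- step at b+1 is a down step; right is impossible
      have h2 : φ (bstart I l + 2) = bstart J l := by
        rcases down_step hφ hx1 hz.1 with ⟨g1, g2, g3⟩ | ⟨g1, g2, g3⟩
        · have g1' : φ (bstart I l + 1) = φ (bstart I l + 2) + 1 := g1
          omega
        · rw [h1, hBs, getD_bstart J (by omega)] at g3; cases g3
      have h3 : φ (bstart I l + 3) = bstart J l + 1 :=
        up_at_bstart hφ hx2 hz.2 (le_of_lt h) h2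
      refine ⟨?_, fun _ => ⟨h1, ?_⟩⟩
      · rw [show bstart I (l+1) = bstart I l + 3 by omega, h3, hsJ]
      · rw [if_pos hJl, h2]; omega
    · -- zigzag in both
      rw [if_neg hJl] at hsJ
      -- step at b+1 is a down step; left leads to a dead end
      have h2 : φ (bstart I l + 2) = bstart J l + 2 := by
        rcases down_step hφ hx1 hz.1 with ⟨g1, g2, g3⟩ | ⟨g1, g2, g3⟩
        · -- wrong branch: φ (b+2) = B
          exfalso
          have g1' : φ (bstart I l + 1) = φ (bstart I l + 2) + 1 := g1
          have hw : φ (bstart I l + 2) = bstart J l := by omega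
          have h3 : φ (bstart I l + 3) = bstart J l + 1 :=
            up_at_bstart hφ hx2 hz.2 (le_of_lt h) hw
          exact peak_dead hφ (x := bstart I l + 3) (by omega)
            (by rw [show bstart I l + 3 = bstart I (l+1) by omega]; exact ht3)
            h hJl h3
        · have g1' : φ (bstart I l + 2) = φ (bstart I l + 1) + 1 := g1
          omega
      have h3 : φ (bstart I l + 3) = bstart J l + 3 := by
        rcases up_step hφ hx2 hz.2 with ⟨g1, g2, g3⟩ | ⟨l'', h'', hJ'', g1, g2⟩
        · have g1' : φ (bstart I l + 3) = φ (bstart I l + 2) + 1 := g1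
          omega
        · exfalso
          have g2' : φ (bstart I l + 3) = bstart J l'' + 1 := g2
          have : l = l'' := bstart_inj J (le_of_lt h) (le_of_lt h'') (by omega)
          subst this
          exact peak_dead hφ (x := bstart I l + 3) (by omega)
            (by rw [show bstart I l + 3 = bstart I (l+1) by omega]; exact ht3)
            h hJl (by omega)
      refine ⟨?_, fun _ => ⟨h1, ?_⟩⟩
      · rw [show bstart I (l+1) = bstart I l + 3 by omega, h3]; omega
      · rw [if_neg hJl, h2]

lemma force (hφ : pathHom (qdirs I) (qdirs J) φ) (hIJ : I ⊆ J) :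
    ∀ l, l ≤ k → φ (bstart I l) = bstart J l := by
  intro l
  induction l with
  | zero =>
    intro _
    have h0 := (hom_ends hφ).1
    have hx0 : 0 < (qdirs I).length := hom_len_pos I
    rcases up_step hφ hx0 (getD_zero I) with ⟨g1, g2, g3⟩ | ⟨l', h', hJ', g1, g2⟩
    · have g1' : φ 1 = φ 0 + 1 := g1
      rw [bstart_zero, bstart_zero]; omega
    · omega
  | succ m ih =>
    intro hm
    exact (force_step hφ hIJ (by omega) (ih (by omega))).1

lemma necessity (hφ : pathHom (qdirs I) (qdirs J) φ) : I ⊆ J := by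
  intro l hlI
  by_contra hlJ
  obtain ⟨h0, hn, htr⟩ := hom_ends hφ
  have hlk := l.isLt
  have hJ' : (⟨(l : ℕ), hlk⟩ : Fin k) ∉ J := by simpa using hlJ
  have hzJ := getD_zig J hlk hJ'
  have hsk : bstart J ((l : ℕ) + 1) = bstart J (l : ℕ) + 3 := by
    rw [bstart_succ J hlk, blk_len, if_neg hJ']
  have hlen : bstart J (l : ℕ) + 3 ≤ (qdirs J).length := by
    have h1 : bstart J ((l : ℕ) + 1) ≤ bstart J k := bstart_le J (by omega) le_rfl
    have h2 := bstart_lt_len J (le_refl k)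
    omega
  have hP : ∃ x, bstart J (l : ℕ) + 2 ≤ φ x := ⟨(qdirs I).length, by rw [hn]; omega⟩
  have hx₀P : bstart J (l : ℕ) + 2 ≤ φ (Nat.find hP) := Nat.find_spec hP
  have hx₀le : Nat.find hP ≤ (qdirs I).length :=
    Nat.find_min' hP (by rw [hn]; omega)
  set x₀ := Nat.find hP with hx₀def
  have hx₀0 : x₀ ≠ 0 := by
    intro hc
    rw [hc, h0] at hx₀P
    omega
  have hprev : ¬ (bstart J (l : ℕ) + 2 ≤ φ (x₀ - 1)) :=
    Nat.find_min hP (by omega)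
  have hxlt : x₀ - 1 < (qdirs I).length := by omega
  have hxs : x₀ - 1 + 1 = x₀ := by omega
  rcases hom_step hφ hxlt with ⟨g1, g2, g3⟩ | ⟨g1, g2, g3⟩
  · rw [hxs] at g1
    have hee : φ (x₀ - 1) = bstart J (l : ℕ) + 1 := by omega
    have hIf : (qdirs I).getD (x₀ - 1) false = false := by
      rw [← g3, hee, hzJ.1]
    obtain ⟨l', h', hI', hxe⟩ := getD_false_iff I hxlt hIf
    have hlv := htr (x₀ - 1) (by omega)
    rw [hee, (lvl_zig J hlk hJ').1, hxe, (lvl_zig I h' hI').1] at hlv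
    have : l' = (l : ℕ) := by omega
    subst this
    exact hI' (by simpa using hlI)
  · rw [hxs] at g1
    omega

end Hom

section Exist

variable {k : ℕ} (I J : Finset (Fin k))

/-- The canonical homomorphism `Q_I → Q_J` (for `I ⊆ J`). -/
def fmap (x : ℕ) : ℕ :=
  x - 2 * ((List.finRange k).countP
    (fun l' => decide (l' ∈ J ∧ l' ∉ I ∧ bstart I (l' : ℕ) + 2 ≤ x)))

/-- Number of folded blocks among the first `l`. -/
def cc (l : ℕ) : ℕ :=
  ((List.finRange k).take l).countP (fun l' => decide (l' ∈ J ∧ l' ∉ I))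

lemma mem_take_lt {l : ℕ} {l' : Fin k} (h : l' ∈ (List.finRange k).take l) :
    (l' : ℕ) < l := by
  rw [List.mem_iff_getElem] at h
  obtain ⟨i, hi, he⟩ := h
  rw [List.getElem_take] at he
  rw [List.getElem_finRange] at he
  have : (l' : ℕ) = i := by rw [← he]; rfl
  simp at hi
  omega

lemma mem_drop_ge {l : ℕ} {l' : Fin k} (h : l' ∈ (List.finRange k).drop l) :
    l ≤ (l' : ℕ) := by
  rw [List.mem_iff_getElem] at h
  obtain ⟨i, hi, he⟩ := h
  rw [List.getElem_drop] at he
  rw [List.getElem_finRange] at he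
  have : (l' : ℕ) = l + i := by rw [← he]; rfl
  omega

lemma cc_zero : cc I J 0 = 0 := by simp [cc]

lemma cc_succ {l : ℕ} (h : l < k) :
    cc I J (l+1) = cc I J l +
      (if (⟨l, h⟩ : Fin k) ∈ J ∧ (⟨l, h⟩ : Fin k) ∉ I then 1 else 0) := by
  have hl : l < (List.finRange k).length := by simpa using h
  rw [cc, List.take_succ, List.getElem?_eq_getElem hl, List.countP_append]
  congr 1
  simp [List.getElem_finRange, Fin.cast, List.countP_cons]

lemma bridge (hIJ : I ⊆ J) : ∀ l, l ≤ k →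
    bstart J l + 2 * cc I J l = bstart I l := by
  intro l
  induction l with
  | zero => intro _; rw [cc_zero, bstart_zero, bstart_zero]
  | succ m ih =>
    intro hm
    have hmk : m < k := by omega
    rw [bstart_succ J hmk, bstart_succ I hmk, cc_succ I J hmk, blk_len, blk_len]
    have := ih (by omega)
    by_cases hI : (⟨m, hmk⟩ : Fin k) ∈ I
    · have hJ : (⟨m, hmk⟩ : Fin k) ∈ J := hIJ hI
      rw [if_pos hI, if_pos hJ, if_neg (by tauto)]
      omega
    · by_cases hJ : (⟨m, hmk⟩ : Fin k) ∈ J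
      · rw [if_neg hI, if_pos hJ, if_pos ⟨hJ, hI⟩]
        omega
      · rw [if_neg hI, if_neg hJ, if_neg (by tauto)]
        omega

lemma count_le (hIJ : I ⊆ J) {l : ℕ} (hl : l ≤ k) {j : ℕ} (hj : j ≤ 1) :
    (List.finRange k).countP
      (fun l' => decide (l' ∈ J ∧ l' ∉ I ∧ bstart I (l' : ℕ) + 2 ≤ bstart I l + j))
      = cc I J l := by
  conv_lhs => rw [← List.take_append_drop l (List.finRange k), List.countP_append]
  have h1 : ((List.finRange k).take l).countP
      (fun l' => decide (l' ∈ J ∧ l' ∉ I ∧ bstart I (l' : ℕ) + 2 ≤ bstart I l + j))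
      = cc I J l := by
    apply List.countP_congr
    intro l' hl'
    have hlt := mem_take_lt hl'
    simp only [decide_eq_true_eq]
    constructor
    · rintro ⟨a, b, _⟩; exact ⟨a, b⟩
    · rintro ⟨a, b⟩
      refine ⟨a, b, ?_⟩
      have hb : (⟨(l' : ℕ), l'.isLt⟩ : Fin k) ∉ I := by simpa using b
      have hs : bstart I ((l' : ℕ) + 1) = bstart I (l' : ℕ) + 3 := by
        rw [bstart_succ I l'.isLt, blk_len, if_neg hb]
      have : bstart I ((l' : ℕ) + 1) ≤ bstart I l := bstart_le I (by omega) hl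
      omega
  have h2 : ((List.finRange k).drop l).countP
      (fun l' => decide (l' ∈ J ∧ l' ∉ I ∧ bstart I (l' : ℕ) + 2 ≤ bstart I l + j))
      = 0 := by
    rw [List.countP_eq_zero]
    intro l' hl'
    have hge := mem_drop_ge hl'
    simp only [decide_eq_true_eq]
    rintro ⟨a, b, c⟩
    have : bstart I l ≤ bstart I (l' : ℕ) := bstart_le I hge (le_of_lt l'.isLt)
    omega
  omega

lemma count_two (hIJ : I ⊆ J) {l : ℕ} (h : l < k) (hI : (⟨l, h⟩ : Fin k) ∉ I) :
    (List.finRange k).countP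
      (fun l' => decide (l' ∈ J ∧ l' ∉ I ∧ bstart I (l' : ℕ) + 2 ≤ bstart I l + 2))
      = cc I J (l+1) := by
  conv_lhs => rw [← List.take_append_drop (l+1) (List.finRange k), List.countP_append]
  have h1 : ((List.finRange k).take (l+1)).countP
      (fun l' => decide (l' ∈ J ∧ l' ∉ I ∧ bstart I (l' : ℕ) + 2 ≤ bstart I l + 2))
      = cc I J (l+1) := by
    apply List.countP_congr
    intro l' hl'
    have hlt := mem_take_lt hl'
    simp only [decide_eq_true_eq]
    constructor
    · rintro ⟨a, b, _⟩; exact ⟨a, b⟩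
    · rintro ⟨a, b⟩
      refine ⟨a, b, ?_⟩
      have : bstart I (l' : ℕ) ≤ bstart I l := bstart_le I (by omega) (le_of_lt h)
      omega
  have h2 : ((List.finRange k).drop (l+1)).countP
      (fun l' => decide (l' ∈ J ∧ l' ∉ I ∧ bstart I (l' : ℕ) + 2 ≤ bstart I l + 2))
      = 0 := by
    rw [List.countP_eq_zero]
    intro l' hl'
    have hge := mem_drop_ge hl'
    simp only [decide_eq_true_eq]
    rintro ⟨a, b, c⟩
    have h3 : bstart I (l+1) ≤ bstart I (l' : ℕ) := bstart_le I hge (le_of_lt l'.isLt)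
    have hs : bstart I (l + 1) = bstart I l + 3 := by
      rw [bstart_succ I h, blk_len, if_neg hI]
    omega
  omega

lemma fmap_zero : fmap I J 0 = 0 := by simp [fmap]

lemma fmap_bstart (hIJ : I ⊆ J) {l : ℕ} (hl : l ≤ k) :
    fmap I J (bstart I l) = bstart J l := by
  have h1 := count_le I J hIJ hl (j := 0) (by omega)
  have h2 := bridge I J hIJ l hl
  rw [show bstart I l + 0 = bstart I l by omega] at h1
  simp only [fmap]; rw [h1]; omega

lemma fmap_bstart1 (hIJ : I ⊆ J) {l : ℕ} (hl : l ≤ k) :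
    fmap I J (bstart I l + 1) = bstart J l + 1 := by
  have h1 := count_le I J hIJ hl (j := 1) (by omega)
  have h2 := bridge I J hIJ l hl
  simp only [fmap]; rw [h1]; omega

lemma fmap_bstart2 (hIJ : I ⊆ J) {l : ℕ} (h : l < k) (hI : (⟨l, h⟩ : Fin k) ∉ I) :
    fmap I J (bstart I l + 2) =
      bstart J l + (if (⟨l, h⟩ : Fin k) ∈ J then 0 else 2) := by
  have h1 := count_two I J hIJ h hI
  have h2 := bridge I J hIJ l (le_of_lt h)
  have h3 := cc_succ I J h
  simp only [fmap]; rw [h1, h3]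
  by_cases hJ : (⟨l, h⟩ : Fin k) ∈ J
  · rw [if_pos hJ, if_pos ⟨hJ, hI⟩]; omega
  · rw [if_neg hJ, if_neg (by tauto)]; omega

lemma fmap_hom (hIJ : I ⊆ J) : pathHom (qdirs I) (qdirs J) (fmap I J) := by
  intro x hx
  have hlenJ := len_qdirs J
  rcases coverage I hx with h0 | hk' | ⟨l, h, ⟨hI, hb⟩ | ⟨hI, hb | hb | hb⟩⟩
  · -- x = 0
    subst h0
    have hf1 : fmap I J 1 = 1 := by
      have h1 := fmap_bstart I J hIJ (l := 0) (by omega)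
      rwa [bstart_zero, bstart_zero] at h1
    constructor
    · intro _
      refine Or.inl ⟨?_, ?_, ?_⟩
      · rw [fmap_zero, hf1]
      · rw [fmap_zero]; exact hom_len_pos J
      · rw [fmap_zero]; exact getD_zero J
    · intro hc; rw [getD_zero] at hc; cases hc
  · -- x = bstart I k (final edge)
    subst hk'
    have hf0 : fmap I J (bstart I k) = bstart J k := fmap_bstart I J hIJ le_rfl
    have hf1 : fmap I J (bstart I k + 1) = bstart J k + 1 := fmap_bstart1 I J hIJ le_rfl
    constructor
    · intro _
      refine Or.inl ⟨?_, ?_, ?_⟩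
      · rw [hf0]; exact hf1
      · rw [hf0]; exact bstart_lt_len J le_rfl
      · rw [hf0]; exact getD_bstart J le_rfl
    · intro hc; rw [getD_bstart I le_rfl] at hc; cases hc
  all_goals subst hb
  -- x = bstart I l (block start)
  case inr.inr.inl | inr.inr.inr.inl =>
    · have hf0 : fmap I J (bstart I l) = bstart J l := fmap_bstart I J hIJ (le_of_lt h)
      have hf1 : fmap I J (bstart I l + 1) = bstart J l + 1 :=
        fmap_bstart1 I J hIJ (le_of_lt h)
      constructor
      · intro _
        refine Or.inl ⟨?_, ?_, ?_⟩
        · rw [hf0]; exact hf1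
        · rw [hf0]; exact bstart_lt_len J (le_of_lt h)
        · rw [hf0]; exact getD_bstart J (le_of_lt h)
      · intro hc; rw [getD_bstart I (le_of_lt h)] at hc; cases hc
  -- x = bstart I l + 1 (zigzag down edge)
  case inr.inr.inr.inr.inl =>
    · have hz := getD_zig I h hI
      have hf1 : fmap I J (bstart I l + 1) = bstart J l + 1 :=
        fmap_bstart1 I J hIJ (le_of_lt h)
      have hf2 : fmap I J (bstart I l + 2) =
          bstart J l + (if (⟨l, h⟩ : Fin k) ∈ J then 0 else 2) :=
        fmap_bstart2 I J hIJ h hI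
      have hsJk : bstart J (l+1) ≤ bstart J k := bstart_le J (by omega) le_rfl
      have hsJ := bstart_succ J h
      rw [blk_len] at hsJ
      constructor
      · intro hc; rw [hz.1] at hc; cases hc
      · intro _
        by_cases hJ : (⟨l, h⟩ : Fin k) ∈ J
        · rw [if_pos hJ] at hf2
          refine Or.inl ⟨?_, ?_, ?_⟩
          · rw [show bstart J l + 0 = bstart J l by omega] at hf2
            rw [hf1]; exact congrArg (· + 1) hf2.symm
          · rw [show bstart J l + 0 = bstart J l by omega] at hf2
            rw [hf2]; exact bstart_lt_len J (le_of_lt h)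
          · rw [show bstart J l + 0 = bstart J l by omega] at hf2
            rw [hf2]; exact getD_bstart J (le_of_lt h)
        · rw [if_neg hJ] at hf2
          rw [if_neg hJ] at hsJ
          refine Or.inr ⟨?_, ?_, ?_⟩
          · rw [hf1]; exact hf2
          · rw [hf1]; omega
          · rw [hf1]; exact (getD_zig J h hJ).1
  -- x = bstart I l + 2 (zigzag second up edge)
  case inr.inr.inr.inr.inr =>
    · have hz := getD_zig I h hI
      have hsI := bstart_succ I h
      rw [blk_len, if_neg hI] at hsI
      have hf2 : fmap I J (bstart I l + 2) =
          bstart J l + (if (⟨l, h⟩ : Fin k) ∈ J then 0 else 2) :=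
        fmap_bstart2 I J hIJ h hI
      have hf3 : fmap I J (bstart I l + 3) = bstart J (l+1) := by
        have h1 := fmap_bstart I J hIJ (l := l+1) (by omega)
        rwa [hsI] at h1
      have hsJk : bstart J (l+1) ≤ bstart J k := bstart_le J (by omega) le_rfl
      have hsJ := bstart_succ J h
      rw [blk_len] at hsJ
      constructor
      · intro _
        by_cases hJ : (⟨l, h⟩ : Fin k) ∈ J
        · rw [if_pos hJ] at hf2
          rw [if_pos hJ] at hsJ
          refine Or.inl ⟨?_, ?_, ?_⟩
          · rw [hf2]
            have : fmap I J (bstart I l + 3) = bstart J l + 1 := by rw [hf3]; omega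
            rw [show bstart J l + 0 + 1 = bstart J l + 1 by omega]
            exact this
          · rw [hf2]
            have : bstart J l < (qdirs J).length := bstart_lt_len J (le_of_lt h)
            omega
          · rw [hf2]
            rw [show bstart J l + 0 = bstart J l by omega]
            exact getD_bstart J (le_of_lt h)
        · rw [if_neg hJ] at hf2
          rw [if_neg hJ] at hsJ
          refine Or.inl ⟨?_, ?_, ?_⟩
          · rw [hf2]
            have : fmap I J (bstart I l + 3) = bstart J l + 3 := by rw [hf3]; omega
            exact this
          · rw [hf2]; omega
          · rw [hf2]; exact (getD_zig J h hJ).2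
      · intro hc; rw [hz.2] at hc; cases hc

end Exist

section Final

variable {k : ℕ} {I J : Finset (Fin k)} {φ ψ : ℕ → ℕ}

lemma hom_val (hφ : pathHom (qdirs I) (qdirs J) φ) {x : ℕ} (hx : x ≤ (qdirs I).length) :
    φ x = fmap I J x := by
  have hIJ := necessity hφ
  have hF := fmap_hom I J hIJ
  rcases Nat.eq_or_lt_of_le hx with he | hlt
  · rw [he, (hom_ends hφ).2.1, (hom_ends hF).2.1]
  rcases coverage I hlt with h0 | hk' | ⟨l, h, ⟨hI, hb⟩ | ⟨hI, hb | hb | hb⟩⟩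
  · rw [h0, (hom_ends hφ).1, (hom_ends hF).1]
  · rw [hk', force hφ hIJ k le_rfl, force hF hIJ k le_rfl]
  · rw [hb, force hφ hIJ l (le_of_lt h), force hF hIJ l (le_of_lt h)]
  · rw [hb, force hφ hIJ l (le_of_lt h), force hF hIJ l (le_of_lt h)]
  · rw [hb, ((force_step hφ hIJ h (force hφ hIJ l (le_of_lt h))).2 hI).1,
      ((force_step hF hIJ h (force hF hIJ l (le_of_lt h))).2 hI).1]
  · rw [hb, ((force_step hφ hIJ h (force hφ hIJ l (le_of_lt h))).2 hI).2,
      ((force_step hF hIJ h (force hF hIJ l (le_of_lt h))).2 hI).2]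

lemma hom_surj (hφ : pathHom (qdirs I) (qdirs J) φ) {y : ℕ} (hy : y ≤ (qdirs J).length) :
    ∃ x ≤ (qdirs I).length, φ x = y := by
  have hIJ := necessity hφ
  have hlenI := len_qdirs I
  have hlenJ := len_qdirs J
  rcases Nat.eq_or_lt_of_le hy with he | hlt
  · exact ⟨(qdirs I).length, le_rfl, by rw [(hom_ends hφ).2.1, he]⟩
  rcases coverage J hlt with h0 | hk' | ⟨l, h, ⟨hJ, hb⟩ | ⟨hJ, hb | hb | hb⟩⟩
  · exact ⟨0, by omega, by rw [(hom_ends hφ).1, h0]⟩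
  · refine ⟨bstart I k, by omega, ?_⟩
    · have := bstart_lt_len I (le_refl k)
      rw [force hφ hIJ k le_rfl, hk']
  · exact ⟨bstart I l, by have := bstart_lt_len I (le_of_lt h); omega,
      by rw [force hφ hIJ l (le_of_lt h), hb]⟩
  · exact ⟨bstart I l, by have := bstart_lt_len I (le_of_lt h); omega,
      by rw [force hφ hIJ l (le_of_lt h), hb]⟩
  all_goals
    have hI : (⟨l, h⟩ : Fin k) ∉ I := fun hc => hJ (hIJ hc)
  all_goals
    have hfs := (force_step hφ hIJ h (force hφ hIJ l (le_of_lt h))).2 hI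
  all_goals
    have hsI := bstart_succ I h
  all_goals
    rw [blk_len, if_neg hI] at hsI
  all_goals
    have hbd : bstart I (l+1) < (qdirs I).length := bstart_lt_len I (by omega)
  · exact ⟨bstart I l + 1, by omega, by rw [hfs.1, hb]⟩
  · exact ⟨bstart I l + 2, by omega, by rw [hfs.2, if_neg hJ, hb]⟩

end Final

end QP

/-- A homomorphism `Q_I → Q_J` exists iff `I ⊆ J`; moreover any such homomorphism
is unique and surjective (onto the vertices of `Q_J`). -/
theorem qdirs_hom_iff_subset {k : ℕ} (hk : 1 ≤ k) (I J : Finset (Fin k)) :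
    ((∃ φ : ℕ → ℕ, pathHom (qdirs I) (qdirs J) φ) ↔ I ⊆ J) ∧
    (∀ φ ψ : ℕ → ℕ, pathHom (qdirs I) (qdirs J) φ → pathHom (qdirs I) (qdirs J) ψ →
      ∀ x ≤ (qdirs I).length, φ x = ψ x) ∧
    (∀ φ : ℕ → ℕ, pathHom (qdirs I) (qdirs J) φ →
      ∀ y ≤ (qdirs J).length, ∃ x ≤ (qdirs I).length, φ x = y) := by
  refine ⟨⟨fun ⟨φ, hφ⟩ => QP.necessity hφ, fun hIJ => ⟨QP.fmap I J, QP.fmap_hom I J hIJ⟩⟩,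
    fun φ ψ hφ hψ x hx => ?_, fun φ hφ y hy => QP.hom_surj hφ hy⟩
  rw [QP.hom_val hφ hx, QP.hom_val hψ hx]
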